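/- Let (X, ρ, μ*) be a metric measure space with μ*(B(x,r)) ≤ c₁ r^q. Let Φ_N be a symmetric kernel satisfying |Φ_N(x,y)| ≤ A N^q / max(1,(N ρ(x,y))^S) with S > q, N ≥ 1. Let f₀ ∈ C(X) be bounded nonnegative and define Ψ_N(x,y) = ∫_X Φ_N(x,z) Φ_N(y,z) f₀(z) dμ*(z). Then Ψ_N satisfies the same type of localization: |Ψ_N(x,y)| ≤ C·A²·c₁·‖f₀‖_∞·N^q / max(1, (N ρ(x,y))^S) for a constant C depending only on q and S. -/

import Mathlib

open MeasureTheory Metric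

section Aux

variable {X : Type} [MetricSpace X] [MeasurableSpace X] [BorelSpace X]

lemma aux_cont (q S N : ℝ) (hS : 0 ≤ S) (x : X) :
    Continuous fun z => N ^ q / max 1 ((N * dist x z) ^ S) := by
  apply continuous_const.div
  · exact continuous_const.max
      ((continuous_const.mul (continuous_const.dist continuous_id)).rpow_const
        (fun z => Or.inr hS))
  · intro z
    have : (1:ℝ) ≤ max 1 ((N * dist x z) ^ S) := le_max_left _ _
    linarith

lemma aux_key (μ : Measure X) (q S c₁ N : ℝ) (hq : 0 < q) (hqS : q < S) (hc₁ : 0 < c₁)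
    (hμ : ∀ (x : X) (r : ℝ), 0 < r → μ (closedBall x r) ≤ ENNReal.ofReal (c₁ * r ^ q))
    (hN : 1 ≤ N) (x : X) :
    ∫⁻ z, ENNReal.ofReal (N ^ q / max 1 ((N * dist x z) ^ S)) ∂μ
      ≤ ENNReal.ofReal (c₁ * (S / (S - q))) := by
  have hS : 0 < S := hq.trans hqS
  set T : ℝ := N ^ q with hT
  have hN0 : (0:ℝ) < N := lt_of_lt_of_le one_pos hN
  have hT0 : 0 < T := Real.rpow_pos_of_pos hN0 q
  set a : ℝ := q / S with ha
  have ha0 : 0 < a := div_pos hq hS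
  have ha1 : a < 1 := (div_lt_one hS).mpr hqS
  set c : ℝ := c₁ * N ^ (q * a - q) with hc
  have hc0 : 0 < c := mul_pos hc₁ (Real.rpow_pos_of_pos hN0 _)
  set g : X → ℝ := fun z => N ^ q / max 1 ((N * dist x z) ^ S) with hg
  have hgpos : ∀ z, 0 < max 1 ((N * dist x z) ^ S) := fun z =>
    lt_of_lt_of_le one_pos (le_max_left _ _)
  have hgnn : ∀ z, 0 ≤ g z := fun z => div_nonneg hT0.le (hgpos z).le
  have hgle : ∀ z, g z ≤ T := fun z => by
    calc N ^ q / max 1 ((N * dist x z) ^ S) ≤ N ^ q / 1 :=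
          div_le_div_of_nonneg_left hT0.le one_pos (le_max_left _ _)
      _ = T := by rw [div_one]
  have hgm : Measurable g := (aux_cont q S N hS.le x).measurable
  rw [lintegral_eq_lintegral_meas_lt μ (Filter.Eventually.of_forall hgnn) hgm.aemeasurable]
  have hbound : ∀ t ∈ Set.Ioi (0:ℝ),
      μ {z | t < g z} ≤ (Set.Ioc 0 T).indicator (fun t => ENNReal.ofReal (c * t ^ (-a))) t := by
    intro t ht
    simp only [Set.mem_Ioi] at ht
    by_cases hTt : t ≤ T
    · rw [Set.indicator_of_mem (Set.mem_Ioc.mpr ⟨ht, hTt⟩)]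
      set r : ℝ := (T / t) ^ (1/S) / N with hr
      have hTt0 : 0 < T / t := div_pos hT0 ht
      have hr0 : 0 < r := div_pos (Real.rpow_pos_of_pos hTt0 _) hN0
      have hsub : {z | t < g z} ⊆ closedBall x r := by
        intro z hz
        simp only [hg, Set.mem_setOf_eq] at hz
        have h1 : t * max 1 ((N * dist x z) ^ S) < T := (lt_div_iff₀ (hgpos z)).mp hz
        have h2 : (N * dist x z) ^ S < T / t := by
          rw [lt_div_iff₀ ht]
          calc (N * dist x z) ^ S * t = t * (N * dist x z) ^ S := by ring
            _ ≤ t * max 1 ((N * dist x z) ^ S) :=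
                mul_le_mul_of_nonneg_left (le_max_right _ _) ht.le
            _ < T := h1
        have h3 : N * dist x z ≤ (T / t) ^ (1/S) := by
          by_contra hcon
          push_neg at hcon
          have := Real.rpow_le_rpow (Real.rpow_nonneg hTt0.le _) hcon.le hS.le
          rw [← Real.rpow_mul hTt0.le, one_div_mul_cancel hS.ne', Real.rpow_one] at this
          linarith
        rw [mem_closedBall, dist_comm]
        rw [hr, le_div_iff₀ hN0]
        calc dist x z * N = N * dist x z := by ring
          _ ≤ _ := h3
      have hrq : c₁ * r ^ q = c * t ^ (-a) := by
        have e1 : r ^ q = ((T / t) ^ (1/S)) ^ q / N ^ q :=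
          Real.div_rpow (Real.rpow_nonneg hTt0.le _) hN0.le q
        have e2 : ((T / t) ^ (1/S)) ^ q = (T / t) ^ a := by
          rw [← Real.rpow_mul hTt0.le]
          congr 1
          rw [ha]; ring
        have e3 : (T / t) ^ a = T ^ a / t ^ a := Real.div_rpow hT0.le ht.le a
        have e4 : T ^ a = N ^ (q * a) := by rw [hT, ← Real.rpow_mul hN0.le]
        have e5 : N ^ (q * a - q) = N ^ (q * a) / N ^ q := Real.rpow_sub hN0 _ _
        have e6 : t ^ (-a) = (t ^ a)⁻¹ := Real.rpow_neg ht.le _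
        rw [e1, e2, e3, e4, hc, e5, e6]
        ring
      calc μ {z | t < g z} ≤ μ (closedBall x r) := measure_mono hsub
        _ ≤ ENNReal.ofReal (c₁ * r ^ q) := hμ x r hr0
        _ = ENNReal.ofReal (c * t ^ (-a)) := by rw [hrq]
    · rw [Set.indicator_of_notMem (by simp [hTt])]
      have : {z | t < g z} = ∅ := by
        ext z
        simp only [Set.mem_setOf_eq, Set.mem_empty_iff_false, iff_false, not_lt]
        exact (hgle z).trans (le_of_not_ge hTt)
      simp [this]
  have hint : IntegrableOn (fun t : ℝ => c * t ^ (-a)) (Set.Ioc 0 T) volume := by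
    have h1 : IntervalIntegrable (fun t : ℝ => t ^ (-a)) volume 0 T :=
      intervalIntegral.intervalIntegrable_rpow' (by linarith)
    exact ((intervalIntegrable_iff_integrableOn_Ioc_of_le hT0.le).mp h1).const_mul c
  have hval : ∫ t in Set.Ioc (0:ℝ) T, c * t ^ (-a) = c₁ * (S / (S - q)) := by
    rw [← intervalIntegral.integral_of_le hT0.le, intervalIntegral.integral_const_mul,
      integral_rpow (Or.inl (by linarith)), Real.zero_rpow (by linarith : -a + 1 ≠ 0)]
    have e1 : T ^ (-a + 1) = N ^ (q * (-a + 1)) := by rw [hT, ← Real.rpow_mul hN0.le]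
    have e2 : N ^ (q * a - q) * N ^ (q * (-a + 1)) = 1 := by
      rw [← Real.rpow_add hN0]
      have : q * a - q + q * (-a + 1) = 0 := by ring
      rw [this, Real.rpow_zero]
    have e3 : -a + 1 = (S - q) / S := by rw [ha]; field_simp; ring
    have e4 : S / (S - q) = (-a + 1)⁻¹ := by rw [e3, inv_div]
    rw [e1, hc, e4]
    linear_combination c₁ * (-a + 1)⁻¹ * e2
  calc ∫⁻ t in Set.Ioi (0:ℝ), μ {z | t < g z}
      ≤ ∫⁻ t in Set.Ioi (0:ℝ),
          (Set.Ioc 0 T).indicator (fun t => ENNReal.ofReal (c * t ^ (-a))) t := by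
        refine lintegral_mono_ae ?_
        filter_upwards [ae_restrict_mem measurableSet_Ioi] with t ht
        exact hbound t ht
    _ = ∫⁻ t in Set.Ioc (0:ℝ) T, ENNReal.ofReal (c * t ^ (-a)) := by
        rw [lintegral_indicator measurableSet_Ioc, Measure.restrict_restrict measurableSet_Ioc,
          Set.inter_eq_self_of_subset_left Set.Ioc_subset_Ioi_self]
    _ = ENNReal.ofReal (∫ t in Set.Ioc (0:ℝ) T, c * t ^ (-a)) := by
        rw [← ofReal_integral_eq_lintegral_ofReal hint]
        refine (ae_restrict_iff' measurableSet_Ioc).mpr (Filter.Eventually.of_forall ?_)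
        intro t ht
        exact mul_nonneg hc0.le (Real.rpow_nonneg ht.1.le _)
    _ = ENNReal.ofReal (c₁ * (S / (S - q))) := by rw [hval]

end Aux

/-- The iterated kernel `Ψ_N(x,y) = ∫ Φ_N(x,z) Φ_N(y,z) f₀(z) dμ*(z)` inherits the
localization of `Φ_N`: `|Ψ_N(x,y)| ≤ C·A²·c₁·‖f₀‖_∞·N^q / max(1,(Nρ(x,y))^S)`. -/
theorem stmt9 (q S : ℝ) (hq : 0 < q) (hqS : q < S) :
    ∃ C : ℝ, 0 < C ∧
      ∀ (X : Type) [MetricSpace X] [MeasurableSpace X] [BorelSpace X]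
        (μ : Measure X) (c₁ : ℝ), 0 < c₁ →
        (∀ (x : X) (r : ℝ), 0 < r → μ (closedBall x r) ≤ ENNReal.ofReal (c₁ * r ^ q)) →
        ∀ (N A : ℝ), 1 ≤ N → 0 < A →
        ∀ (Φ : X → X → ℝ), (∀ x, Measurable (Φ x)) →
        (∀ x y, Φ x y = Φ y x) →
        (∀ x y, |Φ x y| ≤ A * N ^ q / max 1 ((N * dist x y) ^ S)) →
        ∀ (f₀ : X → ℝ), Continuous f₀ → (∀ z, 0 ≤ f₀ z) →
        ∀ F : ℝ, (∀ z, f₀ z ≤ F) →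
        ∀ x y : X,
        |∫ z, Φ x z * Φ y z * f₀ z ∂μ|
          ≤ C * A ^ 2 * c₁ * F * N ^ q / max 1 ((N * dist x y) ^ S) := by
  have hS : 0 < S := hq.trans hqS
  have hSq : (0:ℝ) < S - q := by linarith
  refine ⟨2 * 2 ^ S * (S / (S - q)),
    mul_pos (mul_pos two_pos (Real.rpow_pos_of_pos two_pos S)) (div_pos hS hSq), ?_⟩
  intro X _ _ _ μ c₁ hc₁ hμ N A hN hA Φ hΦm hΦsymm hΦ f₀ hf₀c hf₀nn F hF x y
  have hN0 : (0:ℝ) < N := lt_of_lt_of_le one_pos hN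
  have hNq : (0:ℝ) < N ^ q := Real.rpow_pos_of_pos hN0 q
  set M : ℝ := max 1 ((N * dist x y) ^ S) with hM
  have hM1 : (1:ℝ) ≤ M := le_max_left _ _
  have hM0 : (0:ℝ) < M := lt_of_lt_of_le one_pos hM1
  have hF0 : 0 ≤ F := (hf₀nn x).trans (hF x)
  set h : X → X → ℝ := fun w z => N ^ q / max 1 ((N * dist w z) ^ S) with hh
  have hhpos : ∀ (w z : X), 0 < max 1 ((N * dist w z) ^ S) := fun w z =>
    lt_of_lt_of_le one_pos (le_max_left _ _)
  have hhnn : ∀ (w z : X), 0 ≤ h w z := fun w z => div_nonneg hNq.le (hhpos w z).le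
  set K : ℝ := 2 ^ S * A ^ 2 * F * N ^ q / M with hK
  have hK0 : 0 ≤ K := by positivity
  -- key pointwise bound
  have hpt : ∀ z, ‖Φ x z * Φ y z * f₀ z‖ ≤ K * (h x z + h y z) := by
    intro z
    have habs : ‖Φ x z * Φ y z * f₀ z‖ = |Φ x z| * |Φ y z| * f₀ z := by
      rw [Real.norm_eq_abs, abs_mul, abs_mul, abs_of_nonneg (hf₀nn z)]
    rw [habs]
    -- one of dist x z, dist y z is ≥ dist x y / 2
    have hkey : ∀ w : X, dist x y ≤ 2 * dist w z →
        |Φ w z| ≤ 2 ^ S * A * N ^ q / M := by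
      intro w hw
      have h2S1 : (1:ℝ) ≤ 2 ^ S := Real.one_le_rpow one_le_two hS.le
      have hMle : M ≤ 2 ^ S * max 1 ((N * dist w z) ^ S) := by
        refine max_le ?_ ?_
        · calc (1:ℝ) ≤ 2 ^ S := h2S1
            _ ≤ 2 ^ S * max 1 ((N * dist w z) ^ S) :=
              le_mul_of_one_le_right (by positivity) (le_max_left _ _)
        · have hd : N * dist x y ≤ 2 * (N * dist w z) := by
            calc N * dist x y ≤ N * (2 * dist w z) := mul_le_mul_of_nonneg_left hw hN0.le
              _ = 2 * (N * dist w z) := by ring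
          calc (N * dist x y) ^ S ≤ (2 * (N * dist w z)) ^ S :=
              Real.rpow_le_rpow (by positivity) hd hS.le
            _ = 2 ^ S * (N * dist w z) ^ S :=
              Real.mul_rpow (by norm_num) (by positivity)
            _ ≤ 2 ^ S * max 1 ((N * dist w z) ^ S) :=
              mul_le_mul_of_nonneg_left (le_max_right _ _) (by positivity)
      calc |Φ w z| ≤ A * N ^ q / max 1 ((N * dist w z) ^ S) := hΦ w z
        _ ≤ 2 ^ S * A * N ^ q / M := by
            rw [div_le_div_iff₀ (hhpos w z) hM0]
            calc A * N ^ q * M ≤ A * N ^ q * (2 ^ S * max 1 ((N * dist w z) ^ S)) :=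
                  mul_le_mul_of_nonneg_left hMle (by positivity)
              _ = 2 ^ S * A * N ^ q * max 1 ((N * dist w z) ^ S) := by ring
    have habs2 : ∀ (w z : X), |Φ w z| ≤ A * h w z := by
      intro w z
      have := hΦ w z
      rw [hh]
      calc |Φ w z| ≤ A * N ^ q / max 1 ((N * dist w z) ^ S) := hΦ w z
        _ = A * (N ^ q / max 1 ((N * dist w z) ^ S)) := by ring
    rcases le_or_gt (dist x y) (2 * dist x z) with hcase | hcase
    · calc |Φ x z| * |Φ y z| * f₀ z
          ≤ (2 ^ S * A * N ^ q / M) * (A * h y z) * F :=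
            mul_le_mul
              (mul_le_mul (hkey x hcase) (habs2 y z) (abs_nonneg _) (by positivity))
              (hF z) (hf₀nn z)
              (mul_nonneg (by positivity) (mul_nonneg hA.le (hhnn y z)))
        _ ≤ (2 ^ S * A * N ^ q / M) * (A * (h x z + h y z)) * F := by
            refine mul_le_mul_of_nonneg_right (mul_le_mul_of_nonneg_left ?_ (by positivity)) hF0
            exact mul_le_mul_of_nonneg_left (le_add_of_nonneg_left (hhnn x z)) hA.le
        _ = K * (h x z + h y z) := by rw [hK]; ring
    · have hcase' : dist x y ≤ 2 * dist y z := by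
        have := dist_triangle x z y
        have h1 : dist z y = dist y z := dist_comm z y
        linarith
      calc |Φ x z| * |Φ y z| * f₀ z
          ≤ (A * h x z) * (2 ^ S * A * N ^ q / M) * F :=
            mul_le_mul
              (mul_le_mul (habs2 x z) (hkey y hcase') (abs_nonneg _) (mul_nonneg hA.le (hhnn x z)))
              (hF z) (hf₀nn z)
              (mul_nonneg (mul_nonneg hA.le (hhnn x z)) (by positivity))
        _ ≤ (A * (h x z + h y z)) * (2 ^ S * A * N ^ q / M) * F := by
            refine mul_le_mul_of_nonneg_right (mul_le_mul_of_nonneg_right ?_ (by positivity)) hF0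
            exact mul_le_mul_of_nonneg_left (le_add_of_nonneg_right (hhnn y z)) hA.le
        _ = K * (h x z + h y z) := by rw [hK]; ring
  -- lintegral bound
  have hL : ∀ w : X, ∫⁻ z, ENNReal.ofReal (h w z) ∂μ ≤ ENNReal.ofReal (c₁ * (S / (S - q))) :=
    fun w => aux_key μ q S c₁ N hq hqS hc₁ hμ hN w
  have hmeas : ∀ w : X, Measurable fun z => ENNReal.ofReal (h w z) :=
    fun w => (aux_cont q S N hS.le w).measurable.ennreal_ofReal
  set L : ENNReal := ENNReal.ofReal (c₁ * (S / (S - q))) with hLdef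
  have hmain : ∫⁻ z, ENNReal.ofReal ‖Φ x z * Φ y z * f₀ z‖ ∂μ ≤
      ENNReal.ofReal K * (L + L) := by
    calc ∫⁻ z, ENNReal.ofReal ‖Φ x z * Φ y z * f₀ z‖ ∂μ
        ≤ ∫⁻ z, ENNReal.ofReal K * (ENNReal.ofReal (h x z) + ENNReal.ofReal (h y z)) ∂μ := by
          refine lintegral_mono fun z => ?_
          rw [← ENNReal.ofReal_add (hhnn x z) (hhnn y z), ← ENNReal.ofReal_mul hK0]
          exact ENNReal.ofReal_le_ofReal (hpt z)
      _ = ENNReal.ofReal K *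
          ∫⁻ z, (ENNReal.ofReal (h x z) + ENNReal.ofReal (h y z)) ∂μ := by
          rw [lintegral_const_mul' _ _ ENNReal.ofReal_ne_top]
      _ = ENNReal.ofReal K *
          ((∫⁻ z, ENNReal.ofReal (h x z) ∂μ) + ∫⁻ z, ENNReal.ofReal (h y z) ∂μ) := by
          rw [lintegral_add_left (hmeas x)]
      _ ≤ ENNReal.ofReal K * (L + L) := by
          exact mul_le_mul_right (add_le_add (hL x) (hL y)) _
  have hnorm : |∫ z, Φ x z * Φ y z * f₀ z ∂μ| ≤
      (∫⁻ z, ENNReal.ofReal ‖Φ x z * Φ y z * f₀ z‖ ∂μ).toReal := by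
    rw [← Real.norm_eq_abs]
    exact norm_integral_le_lintegral_norm _
  have hfin : (ENNReal.ofReal K * (L + L)).toReal = K * (2 * (c₁ * (S / (S - q)))) := by
    rw [hLdef, ENNReal.toReal_mul, ENNReal.toReal_add ENNReal.ofReal_ne_top ENNReal.ofReal_ne_top,
      ENNReal.toReal_ofReal hK0,
      ENNReal.toReal_ofReal (mul_nonneg hc₁.le (div_nonneg hS.le hSq.le))]
    ring
  have hend : K * (2 * (c₁ * (S / (S - q)))) =
      2 * 2 ^ S * (S / (S - q)) * A ^ 2 * c₁ * F * N ^ q / M := by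
    rw [hK]; ring
  calc |∫ z, Φ x z * Φ y z * f₀ z ∂μ|
      ≤ (∫⁻ z, ENNReal.ofReal ‖Φ x z * Φ y z * f₀ z‖ ∂μ).toReal := hnorm
    _ ≤ (ENNReal.ofReal K * (L + L)).toReal :=
        ENNReal.toReal_mono (by finiteness) hmain
    _ = K * (2 * (c₁ * (S / (S - q)))) := hfin
    _ = 2 * 2 ^ S * (S / (S - q)) * A ^ 2 * c₁ * F * N ^ q / M := hend
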